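/- arXiv:2009.09572 — 2 statements merged into one kernel-verified Lean document; each statement's English description precedes it below -/
import Mathlib

section
/- For the fractional kernel K(t) = c·t^{α-1}/Γ(α) with c > 0 and α ∈ (0,1], the function R(t) = c·t^{α-1}·E_{α,α}(-c t^α) satisfies (K*R)(t) = K(t) - R(t) for all t > 0, where E_{α,β}(z) = Σ_{n≥0} z^n/Γ(αn+β) is the Mittag-Leffler function. -/
open MeasureTheory intervalIntegral

/-- The (real) Mittag-Leffler function `E_{α,β}(z) = ∑_{n≥0} zⁿ / Γ(α n + β)`. -/
noncomputable def mittagLeffler (α β z : ℝ) : ℝ :=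
  ∑' n : ℕ, z ^ n / Real.Gamma (α * n + β)

open Filter in
lemma myGamma_lb {α : ℝ} (hα : 0 < α) (hα1 : α ≤ 1) {y : ℝ} (hy : 2 ≤ y) :
    y ^ α / 2 * Real.Gamma y ≤ Real.Gamma (y + α) := by
  have hy0 : (0:ℝ) < y := by linarith
  have hyα : (0:ℝ) < y + α := by linarith
  have hΓy : 0 < Real.Gamma y := Real.Gamma_pos_of_pos hy0
  have hΓyα : 0 < Real.Gamma (y + α) := Real.Gamma_pos_of_pos hyα
  -- convexity of log Gamma
  have hcvx := Real.convexOn_log_Gamma.2 (Set.mem_Ioi.2 hyα)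
      (Set.mem_Ioi.2 (by linarith : (0:ℝ) < y + α + 1)) hα.le (by linarith : (0:ℝ) ≤ 1 - α)
      (by ring)
  have harg : α • (y + α) + (1 - α) • (y + α + 1) = y + 1 := by
    simp only [smul_eq_mul]; ring
  rw [harg] at hcvx
  simp only [Function.comp_apply, smul_eq_mul] at hcvx
  have hGadd : Real.Gamma (y + α + 1) = (y + α) * Real.Gamma (y + α) :=
    Real.Gamma_add_one hyα.ne'
  rw [hGadd, Real.log_mul hyα.ne' hΓyα.ne'] at hcvx
  have hlog : Real.log (Real.Gamma (y + 1)) ≤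
      Real.log (Real.Gamma (y + α)) + (1 - α) * Real.log (y + α) := by nlinarith [hcvx]
  have hexp : Real.Gamma (y + 1) ≤ Real.Gamma (y + α) * (y + α) ^ (1 - α) := by
    have h1 : Real.Gamma (y + 1) =
        Real.exp (Real.log (Real.Gamma (y + 1))) :=
      (Real.exp_log (Real.Gamma_pos_of_pos (by linarith))).symm
    rw [h1]
    calc Real.exp (Real.log (Real.Gamma (y + 1)))
        ≤ Real.exp (Real.log (Real.Gamma (y + α)) + (1 - α) * Real.log (y + α)) :=
          Real.exp_le_exp.2 hlog
      _ = Real.Gamma (y + α) * (y + α) ^ (1 - α) := by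
          rw [Real.exp_add, Real.exp_log hΓyα, Real.rpow_def_of_pos hyα, mul_comm (Real.log _)]
  have hG1 : Real.Gamma (y + 1) = y * Real.Gamma y := Real.Gamma_add_one hy0.ne'
  -- (y+α)^(1-α) ≤ 2 * y^(1-α)
  have hb : (y + α) ^ (1 - α) ≤ 2 * y ^ (1 - α) := by
    calc (y + α) ^ (1 - α) ≤ (2 * y) ^ (1 - α) :=
          Real.rpow_le_rpow hyα.le (by linarith) (by linarith)
      _ = 2 ^ (1 - α) * y ^ (1 - α) := Real.mul_rpow (by norm_num) hy0.le
      _ ≤ 2 * y ^ (1 - α) := by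
          have : (2:ℝ) ^ (1 - α) ≤ 2 ^ (1:ℝ) :=
            Real.rpow_le_rpow_of_exponent_le (by norm_num) (by linarith)
          rw [Real.rpow_one] at this
          have := Real.rpow_nonneg hy0.le (1 - α)
          nlinarith
  have hyy : y ^ α * y ^ (1 - α) = y := by
    rw [← Real.rpow_add hy0, add_sub_cancel, Real.rpow_one]
  have hpowpos : 0 < y ^ (1 - α) := Real.rpow_pos_of_pos hy0 _
  have key : y * Real.Gamma y ≤ Real.Gamma (y + α) * (2 * y ^ (1 - α)) := by
    calc y * Real.Gamma y = Real.Gamma (y + 1) := hG1.symm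
      _ ≤ Real.Gamma (y + α) * (y + α) ^ (1 - α) := hexp
      _ ≤ Real.Gamma (y + α) * (2 * y ^ (1 - α)) := by nlinarith
  nlinarith [key, hyy, Real.rpow_pos_of_pos hy0 α]

open Filter in
lemma mySummable_ml {α β : ℝ} (hα : 0 < α) (hα1 : α ≤ 1) (hβ : 0 < β) (x : ℝ) :
    Summable (fun n : ℕ => x ^ n / Real.Gamma (α * n + β)) := by
  apply summable_of_ratio_norm_eventually_le (r := 1/2) (by norm_num)
  have htend : Tendsto (fun n : ℕ => α * n + β) atTop atTop := by
    apply tendsto_atTop_add_const_right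
    exact (tendsto_natCast_atTop_atTop (R := ℝ)).const_mul_atTop hα
  set M : ℝ := max 2 ((4 * |x| + 1) ^ α⁻¹) with hM
  filter_upwards [htend.eventually_ge_atTop M] with n hn
  set y : ℝ := α * n + β with hy
  have hy2 : 2 ≤ y := le_trans (le_max_left _ _) hn
  have hy0 : (0:ℝ) < y := by linarith
  have hΓy : 0 < Real.Gamma y := Real.Gamma_pos_of_pos hy0
  have hΓyα : 0 < Real.Gamma (y + α) := Real.Gamma_pos_of_pos (by linarith)
  have hpow : 4 * |x| + 1 ≤ y ^ α := by
    calc 4 * |x| + 1 = ((4 * |x| + 1) ^ α⁻¹) ^ α :=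
          (Real.rpow_inv_rpow (by positivity) hα.ne').symm
      _ ≤ y ^ α := Real.rpow_le_rpow (by positivity)
          (le_trans (le_max_right _ _) hn) hα.le
  have hlb := myGamma_lb hα hα1 hy2
  have harg : α * (n + 1 : ℕ) + β = y + α := by push_cast; ring
  rw [harg]
  have hnorm : ∀ z : ℝ, 0 < z → ∀ m : ℕ, ‖x ^ m / z‖ = |x| ^ m / z := by
    intro z hz m
    rw [norm_div, norm_pow, Real.norm_eq_abs, Real.norm_eq_abs, abs_of_pos hz]
  rw [hnorm _ hΓyα, hnorm _ hΓy]
  rw [show (1:ℝ)/2 * (|x| ^ n / Real.Gamma y) = (1/2 * |x| ^ n) / Real.Gamma y by ring,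
    div_le_div_iff₀ hΓyα hΓy]
  have h1 : |x| ^ (n + 1) * Real.Gamma y = |x| * (|x| ^ n * Real.Gamma y) := by ring
  have h2 : |x| ^ n * Real.Gamma y ≥ 0 := by positivity
  -- |x|^{n+1} Γ y ≤ (1/2) |x|^n Γ(y+α), using Γ(y+α) ≥ y^α/2 Γ y ≥ 2|x| Γ y  (if |x| ≥ 0)
  have hkey : 2 * |x| * Real.Gamma y ≤ Real.Gamma (y + α) := by
    calc 2 * |x| * Real.Gamma y ≤ y ^ α / 2 * Real.Gamma y := by nlinarith
      _ ≤ Real.Gamma (y + α) := hlb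
  calc |x| ^ (n + 1) * Real.Gamma y = |x| ^ n * (|x| * Real.Gamma y) := by ring
    _ ≤ |x| ^ n * (Real.Gamma (y + α) / 2) := by
        apply mul_le_mul_of_nonneg_left _ (by positivity)
        nlinarith
    _ = 1 / 2 * |x| ^ n * Real.Gamma (y + α) := by ring

lemma myBeta01 {a b : ℝ} (ha : 0 < a) (hb : 0 < b) :
    ∫ u in (0:ℝ)..1, u ^ (b - 1) * (1 - u) ^ (a - 1) =
      Real.Gamma a * Real.Gamma b / Real.Gamma (a + b) := by
  have hΓab : 0 < Real.Gamma (a + b) := Real.Gamma_pos_of_pos (by linarith)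
  have h := Complex.Gamma_mul_Gamma_eq_betaIntegral (s := (b : ℂ)) (t := (a : ℂ))
      (by simpa using hb) (by simpa using ha)
  have hbeta : Complex.betaIntegral (b : ℂ) (a : ℂ) =
      ((∫ u in (0:ℝ)..1, u ^ (b - 1) * (1 - u) ^ (a - 1) : ℝ) : ℂ) := by
    rw [Complex.betaIntegral, ← intervalIntegral.integral_ofReal]
    apply intervalIntegral.integral_congr
    intro u hu
    rw [Set.uIcc_of_le (by norm_num : (0:ℝ) ≤ 1)] at hu
    obtain ⟨hu0, hu1⟩ := hu
    simp only [Complex.ofReal_mul, Complex.ofReal_cpow hu0,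
      Complex.ofReal_cpow (by linarith : (0:ℝ) ≤ 1 - u)]
    push_cast
    ring
  rw [hbeta, Complex.Gamma_ofReal, Complex.Gamma_ofReal, ← Complex.ofReal_add,
    Complex.Gamma_ofReal, ← Complex.ofReal_mul, ← Complex.ofReal_mul] at h
  have h' := Complex.ofReal_injective h
  rw [show b + a = a + b by ring] at h'
  field_simp
  linarith [h']

lemma myBetaIntegrable {a b t : ℝ} (ha : 0 < a) (hb : 0 < b) (ht : 0 < t) :
    IntervalIntegrable (fun s => (t - s) ^ (a - 1) * s ^ (b - 1)) volume 0 t := by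
  have h1 : IntervalIntegrable (fun s => (t - s) ^ (a - 1) * s ^ (b - 1)) volume 0 (t / 2) := by
    have hint : IntervalIntegrable (fun s : ℝ => s ^ (b - 1)) volume 0 (t / 2) :=
      intervalIntegral.intervalIntegrable_rpow' (by linarith)
    have hcont : ContinuousOn (fun s : ℝ => (t - s) ^ (a - 1)) (Set.uIcc 0 (t / 2)) := by
      apply ContinuousOn.rpow_const (by fun_prop)
      intro s hs
      rw [Set.uIcc_of_le (by linarith : (0:ℝ) ≤ t / 2)] at hs
      left
      have := hs.2
      intro hcontra
      nlinarith [hs.1, hs.2]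
    exact hint.continuousOn_mul hcont
  have h2 : IntervalIntegrable (fun s => (t - s) ^ (a - 1) * s ^ (b - 1)) volume (t / 2) t := by
    have hint0 : IntervalIntegrable (fun s : ℝ => s ^ (a - 1)) volume 0 (t / 2) :=
      intervalIntegral.intervalIntegrable_rpow' (by linarith)
    have hint : IntervalIntegrable (fun s : ℝ => (t - s) ^ (a - 1)) volume (t / 2) t := by
      have := hint0.comp_sub_left t
      simpa [sub_zero, show t - t / 2 = t / 2 by ring] using this.symm
    have hcont : ContinuousOn (fun s : ℝ => s ^ (b - 1)) (Set.uIcc (t / 2) t) := by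
      apply ContinuousOn.rpow_const (by fun_prop)
      intro s hs
      rw [Set.uIcc_of_le (by linarith : t / 2 ≤ t)] at hs
      left
      nlinarith [hs.1]
    exact hint.mul_continuousOn hcont
  exact h1.trans h2

lemma myBetaVal {a b t : ℝ} (ha : 0 < a) (hb : 0 < b) (ht : 0 < t) :
    ∫ s in (0:ℝ)..t, (t - s) ^ (a - 1) * s ^ (b - 1) =
      Real.Gamma a * Real.Gamma b / Real.Gamma (a + b) * t ^ (a + b - 1) := by
  have hsub := intervalIntegral.integral_comp_mul_right
    (f := fun s => (t - s) ^ (a - 1) * s ^ (b - 1)) (a := (0:ℝ)) (b := 1) ht.ne'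
  rw [zero_mul, one_mul] at hsub
  have hcongr : (∫ u in (0:ℝ)..1, (t - u * t) ^ (a - 1) * (u * t) ^ (b - 1)) =
      ∫ u in (0:ℝ)..1, t ^ (a + b - 2) * (u ^ (b - 1) * (1 - u) ^ (a - 1)) := by
    apply intervalIntegral.integral_congr
    intro u hu
    rw [Set.uIcc_of_le (by norm_num : (0:ℝ) ≤ 1)] at hu
    obtain ⟨hu0, hu1⟩ := hu
    simp only []
    have h1 : t - u * t = t * (1 - u) := by ring
    rw [h1, Real.mul_rpow ht.le (by linarith), Real.mul_rpow hu0 ht.le]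
    rw [show t ^ (a - 1) * (1 - u) ^ (a - 1) * (u ^ (b - 1) * t ^ (b - 1)) =
      (t ^ (a - 1) * t ^ (b - 1)) * (u ^ (b - 1) * (1 - u) ^ (a - 1)) by ring,
      ← Real.rpow_add ht]
    ring_nf
  rw [hcongr, intervalIntegral.integral_const_mul, myBeta01 ha hb] at hsub
  have := congrArg (fun z : ℝ => t * z) hsub
  simp only [smul_eq_mul] at this
  rw [show t * (t⁻¹ * ∫ s in (0:ℝ)..t, (t - s) ^ (a - 1) * s ^ (b - 1)) =
    ∫ s in (0:ℝ)..t, (t - s) ^ (a - 1) * s ^ (b - 1) by field_simp] at this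
  rw [← this]
  have hpow : t ^ (a + b - 1) = t * t ^ (a + b - 2) := by
    rw [show a + b - 1 = 1 + (a + b - 2) by ring, Real.rpow_add ht, Real.rpow_one]
  rw [hpow]
  ring

/-- For the fractional kernel `K(t) = c·t^{α-1}/Γ(α)` with `c > 0` and `α ∈ (0,1]`, the
function `R(t) = c·t^{α-1}·E_{α,α}(-c t^α)` satisfies `(K*R)(t) = K(t) - R(t)` for all
`t > 0`. -/
theorem fractional_kernel_resolvent (c α : ℝ) (hc : 0 < c) (hα : 0 < α) (hα1 : α ≤ 1)
    (K R : ℝ → ℝ)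
    (hK : ∀ t, K t = c * t ^ (α - 1) / Real.Gamma α)
    (hR : ∀ t, R t = c * t ^ (α - 1) * mittagLeffler α α (-(c * t ^ α))) :
    ∀ t > (0 : ℝ), (∫ s in (0:ℝ)..t, K (t - s) * R s) = K t - R t := by
  intro t ht
  have hΓα : 0 < Real.Gamma α := Real.Gamma_pos_of_pos hα
  set x : ℝ := c * t ^ α with hx
  have htα : (0:ℝ) < t ^ α := Real.rpow_pos_of_pos ht α
  have hx0 : 0 < x := by positivity
  set F : ℕ → ℝ → ℝ := fun n s =>
    (K (t - s) * (c * s ^ (α - 1))) * ((-(c * s ^ α)) ^ n / Real.Gamma (α * n + α)) with hF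
  have hb : ∀ n : ℕ, (0:ℝ) < α * n + α := fun n => by positivity
  have hΓb : ∀ n : ℕ, 0 < Real.Gamma (α * n + α) := fun n => Real.Gamma_pos_of_pos (hb n)
  have hΓ2 : ∀ n : ℕ, 0 < Real.Gamma (α * n + 2 * α) :=
    fun n => Real.Gamma_pos_of_pos (by positivity)
  -- pointwise series representation
  have hKR : ∀ s, K (t - s) * R s = ∑' n, F n s := by
    intro s
    rw [hR s, mittagLeffler]
    calc K (t - s) * (c * s ^ (α - 1) * ∑' n : ℕ, (-(c * s ^ α)) ^ n / Real.Gamma (α * n + α))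
        = (K (t - s) * (c * s ^ (α - 1))) *
            ∑' n : ℕ, (-(c * s ^ α)) ^ n / Real.Gamma (α * n + α) := by ring
      _ = ∑' n, F n s := tsum_mul_left.symm
  -- representation of F n on Ioc
  have hFrep : ∀ n : ℕ, ∀ s ∈ Set.Ioc (0:ℝ) t,
      F n s = (c ^ 2 * (-c) ^ n / (Real.Gamma α * Real.Gamma (α * n + α))) *
        ((t - s) ^ (α - 1) * s ^ (α * n + α - 1)) := by
    intro n s hs
    obtain ⟨hs0, hst⟩ := hs
    simp only [hF, hK]
    have h1 : (-(c * s ^ α)) ^ n = (-c) ^ n * s ^ (α * n) := by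
      rw [show -(c * s ^ α) = (-c) * s ^ α by ring, mul_pow,
        ← Real.rpow_natCast (s ^ α) n, ← Real.rpow_mul hs0.le]
    rw [h1, show α * (n:ℝ) + α - 1 = (α - 1) + α * n by ring, Real.rpow_add hs0]
    field_simp
  have hFae : ∀ n : ℕ, F n =ᵐ[volume.restrict (Set.Ioc 0 t)]
      fun s => (c ^ 2 * (-c) ^ n / (Real.Gamma α * Real.Gamma (α * n + α))) *
        ((t - s) ^ (α - 1) * s ^ (α * n + α - 1)) :=
    fun n => (ae_restrict_iff' measurableSet_Ioc).2 (ae_of_all _ (hFrep n))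
  have hbetaInt : ∀ n : ℕ, IntegrableOn
      (fun s => (t - s) ^ (α - 1) * s ^ (α * n + α - 1)) (Set.Ioc 0 t) volume := fun n =>
    (intervalIntegrable_iff_integrableOn_Ioc_of_le ht.le).1 (myBetaIntegrable hα (hb n) ht)
  have hFint : ∀ n : ℕ, Integrable (F n) (volume.restrict (Set.Ioc 0 t)) := fun n =>
    (((hbetaInt n).const_mul _).congr (hFae n).symm)
  -- value of beta set integral
  have hbetaVal : ∀ n : ℕ, ∫ s in Set.Ioc (0:ℝ) t, ((t - s) ^ (α - 1) * s ^ (α * n + α - 1)) =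
      Real.Gamma α * Real.Gamma (α * n + α) / Real.Gamma (α * n + 2 * α) *
        t ^ (α * n + 2 * α - 1) := by
    intro n
    rw [← intervalIntegral.integral_of_le ht.le, myBetaVal hα (hb n) ht,
      show α + (α * (n:ℝ) + α) = α * n + 2 * α by ring]
  -- shared algebra
  have halg : ∀ (d : ℝ) (n : ℕ),
      (c ^ 2 * d ^ n / (Real.Gamma α * Real.Gamma (α * n + α))) *
        (Real.Gamma α * Real.Gamma (α * n + α) / Real.Gamma (α * n + 2 * α) *
          t ^ (α * n + 2 * α - 1)) =
      (c ^ 2 * t ^ (2 * α - 1)) * ((d * t ^ α) ^ n / Real.Gamma (α * n + 2 * α)) := by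
    intro d n
    have ht1 : t ^ (α * (n:ℝ) + 2 * α - 1) = (t ^ α) ^ n * t ^ (2 * α - 1) := by
      rw [show α * (n:ℝ) + 2 * α - 1 = α * n + (2 * α - 1) by ring, Real.rpow_add ht,
        Real.rpow_mul ht.le, Real.rpow_natCast]
    rw [ht1, mul_pow]
    field_simp
  -- integral values
  have hFval : ∀ n : ℕ, ∫ s in Set.Ioc (0:ℝ) t, F n s =
      (c ^ 2 * t ^ (2 * α - 1)) * ((-x) ^ n / Real.Gamma (α * n + 2 * α)) := by
    intro n
    rw [integral_congr_ae (hFae n), MeasureTheory.integral_const_mul, hbetaVal n, halg (-c) n,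
      show -c * t ^ α = -x by rw [hx]; ring]
  -- norm integral values
  have hFnorm : ∀ n : ℕ, ∫ s, ‖F n s‖ ∂(volume.restrict (Set.Ioc 0 t)) =
      (c ^ 2 * t ^ (2 * α - 1)) * (x ^ n / Real.Gamma (α * n + 2 * α)) := by
    intro n
    have h1 : (fun s => ‖F n s‖) =ᵐ[volume.restrict (Set.Ioc 0 t)]
        fun s => (c ^ 2 * c ^ n / (Real.Gamma α * Real.Gamma (α * n + α))) *
          ((t - s) ^ (α - 1) * s ^ (α * n + α - 1)) := by
      refine (ae_restrict_iff' measurableSet_Ioc).2 (ae_of_all _ fun s hs => ?_)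
      simp only []
      rw [hFrep n s hs, norm_mul, Real.norm_eq_abs, Real.norm_eq_abs,
        abs_of_nonneg (mul_nonneg (Real.rpow_nonneg (by linarith [hs.2]) _)
          (Real.rpow_nonneg hs.1.le _)),
        abs_div, abs_of_pos (mul_pos hΓα (hΓb n))]
      simp [abs_mul, abs_pow, abs_neg, abs_of_pos hc]
    rw [integral_congr_ae h1, MeasureTheory.integral_const_mul, hbetaVal n, halg c n, hx]
  -- measurability
  have hFmeas : ∀ n : ℕ, AEStronglyMeasurable (F n) (volume.restrict (Set.Ioc 0 t)) := by
    intro n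
    have hFeq : F n = fun s => ((c * (t - s) ^ (α - 1) / Real.Gamma α) * (c * s ^ (α - 1))) *
        ((-(c * s ^ α)) ^ n / Real.Gamma (α * n + α)) := by
      funext s; rw [hF]; simp only [hK]
    rw [hFeq]
    apply Measurable.aestronglyMeasurable
    fun_prop
  -- summability of norm integrals
  have hsumnorm : Summable (fun n : ℕ =>
      (c ^ 2 * t ^ (2 * α - 1)) * (x ^ n / Real.Gamma (α * n + 2 * α))) :=
    (mySummable_ml hα hα1 (by positivity) x).mul_left _
  have hne : ∑' n : ℕ, ∫⁻ s, ‖F n s‖₊ ∂(volume.restrict (Set.Ioc 0 t)) ≠ ⊤ := by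
    have heq : ∀ n : ℕ, ∫⁻ s, ‖F n s‖₊ ∂(volume.restrict (Set.Ioc 0 t)) =
        ENNReal.ofReal ((c ^ 2 * t ^ (2 * α - 1)) * (x ^ n / Real.Gamma (α * n + 2 * α))) := by
      intro n
      simp only [← enorm_eq_nnnorm]
      rw [← ofReal_integral_norm_eq_lintegral_enorm (hFint n), hFnorm n]
    rw [tsum_congr heq, ← ENNReal.ofReal_tsum_of_nonneg (fun n => by positivity) hsumnorm]
    exact ENNReal.ofReal_ne_top
  -- main computation
  rw [intervalIntegral.integral_of_le ht.le]
  have hswap : ∫ s in Set.Ioc (0:ℝ) t, K (t - s) * R s =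
      ∑' n, ∫ s in Set.Ioc (0:ℝ) t, F n s := by
    calc ∫ s in Set.Ioc (0:ℝ) t, K (t - s) * R s
        = ∫ s in Set.Ioc (0:ℝ) t, ∑' n, F n s := by simp_rw [hKR]
      _ = ∑' n, ∫ s in Set.Ioc (0:ℝ) t, F n s := integral_tsum hFmeas hne
  rw [hswap, tsum_congr hFval]
  -- final algebra with Mittag-Leffler series
  have hsum1 : Summable (fun n : ℕ => (-x) ^ n / Real.Gamma (α * n + α)) :=
    mySummable_ml hα hα1 hα (-x)
  rw [hK t, hR t, mittagLeffler, show -(c * t ^ α) = -x by rw [hx]]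
  rw [Summable.tsum_eq_zero_add hsum1]
  simp only [pow_zero, Nat.cast_zero, mul_zero, zero_add]
  have hterm : ∀ n : ℕ, (c ^ 2 * t ^ (2 * α - 1)) * ((-x) ^ n / Real.Gamma (α * n + 2 * α)) =
      (-(c * t ^ (α - 1))) * ((-x) ^ (n + 1) / Real.Gamma (α * ((n:ℕ) + 1 : ℕ) + α)) := by
    intro n
    have h2 : α * (((n:ℕ) + 1 : ℕ) : ℝ) + α = α * n + 2 * α := by push_cast; ring
    have h3 : t ^ (2 * α - 1) = t ^ (α - 1) * t ^ α := by
      rw [← Real.rpow_add ht]; ring_nf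
    rw [h2, h3, pow_succ, hx]
    field_simp
    ring
  rw [tsum_congr hterm, tsum_mul_left]
  ring
end

section
/- For the fractional kernel K(t) = t^{α-1}/Γ(α) with α ∈ (1/2, 1], for every T < ∞ there exists γ ∈ (0,2] and C > 0 such that ∫₀ᵀ (K(t+h) - K(t))² dt ≤ C h^γ for all sufficiently small h > 0. -/
open MeasureTheory intervalIntegral

/-- For the fractional kernel `K(t) = t^{α-1}/Γ(α)` with `α ∈ (1/2, 1]`, for every `T < ∞`
there exist `γ ∈ (0,2]` and `C > 0` such that `∫₀ᵀ (K(t+h) - K(t))² dt ≤ C h^γ` for all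
sufficiently small `h > 0`. -/
theorem fractional_kernel_shift_L2 (α : ℝ) (hα : 1/2 < α) (hα1 : α ≤ 1)
    (K : ℝ → ℝ) (hK : ∀ t, K t = t ^ (α - 1) / Real.Gamma α) :
    ∀ T : ℝ, 0 < T →
      ∃ γ : ℝ, 0 < γ ∧ γ ≤ 2 ∧ ∃ C > (0:ℝ), ∃ h₀ > (0:ℝ), ∀ h : ℝ, 0 < h → h ≤ h₀ →
        (∫ t in (0:ℝ)..T, (K (t + h) - K t) ^ 2) ≤ C * h ^ γ := by
  intro T hT
  set c : ℝ := Real.Gamma α with hc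
  have hcpos : 0 < c := Real.Gamma_pos_of_pos (by linarith)
  have hexp : (-1:ℝ) < 2*α - 2 := by linarith
  -- the dominating function
  set g : ℝ → ℝ := fun t => t ^ (2*α - 2) / c^2 with hg
  have hgint : ∀ a b : ℝ, IntervalIntegrable g volume a b := fun a b =>
    (intervalIntegral.intervalIntegrable_rpow' hexp).div_const _
  have hgnonneg : ∀ t : ℝ, 0 ≤ t → 0 ≤ g t := fun t ht =>
    div_nonneg (Real.rpow_nonneg ht _) (sq_nonneg c)
  -- K t ^ 2 = g t for t ≥ 0
  have hKsq : ∀ t : ℝ, 0 ≤ t → K t ^ 2 = g t := by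
    intro t ht
    rw [hK, div_pow, hg]
    congr 1
    rw [show (2*α - 2) = (α - 1) * (2:ℕ) by push_cast; ring, Real.rpow_mul ht,
      Real.rpow_natCast]
  refine ⟨2*α - 1, by linarith, by linarith, 1/((2*α-1) * c^2),
    one_div_pos.mpr (mul_pos (by linarith) (pow_pos hcpos 2)), T, hT, ?_⟩
  intro h hh hhT
  -- pointwise bound for t > 0
  have hpt : ∀ t : ℝ, 0 < t → (K (t + h) - K t) ^ 2 ≤ g t - K (t + h) ^ 2 := by
    intro t ht
    have hth : 0 < t + h := by linarith
    have hmono : K (t + h) ≤ K t := by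
      rw [hK, hK]
      exact div_le_div_of_nonneg_right
        (Real.rpow_le_rpow_of_nonpos ht (by linarith) (by linarith)) hcpos.le
    have hKnn : 0 ≤ K (t + h) := by
      rw [hK]; exact div_nonneg (Real.rpow_nonneg hth.le _) hcpos.le
    rw [← hKsq t ht.le]
    nlinarith [mul_le_mul_of_nonneg_right hmono hKnn]
  -- integrability of shifted square
  have hcontsh : ContinuousOn (fun t => K (t + h) ^ 2) (Set.uIcc 0 T) := by
    have : ∀ t ∈ Set.uIcc (0:ℝ) T, 0 < t + h := by
      intro t ht
      rw [Set.uIcc_of_le hT.le] at ht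
      have := ht.1; linarith
    intro t ht
    have : ContinuousWithinAt (fun t : ℝ => (t + h) ^ (α - 1) / c) (Set.uIcc 0 T) t := by
      apply ContinuousWithinAt.div_const
      exact ((continuous_id.add continuous_const).continuousWithinAt).rpow_const
        (Or.inl (ne_of_gt (this t ht)))
    have := (this.pow 2)
    refine this.congr (fun y _ => by rw [hK]; rfl) (by rw [hK]; rfl)
  have hsh_int : IntervalIntegrable (fun t => K (t + h) ^ 2) volume 0 T :=
    hcontsh.intervalIntegrable
  -- integrability of the LHS
  have hFmeas : AEStronglyMeasurable (fun t => (K (t + h) - K t) ^ 2)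
      (volume.restrict (Set.Ioc (0:ℝ) T)) := by
    have : (fun t => (K (t + h) - K t) ^ 2)
        = fun t : ℝ => ((t + h) ^ (α - 1) / c - t ^ (α - 1) / c) ^ 2 := by
      funext t; rw [hK, hK]
    rw [this]
    apply Measurable.aestronglyMeasurable
    fun_prop
  have hF_int : IntervalIntegrable (fun t => (K (t + h) - K t) ^ 2) volume 0 T := by
    rw [intervalIntegrable_iff_integrableOn_Ioc_of_le hT.le]
    apply ((hgint 0 T).1).mono' hFmeas
    filter_upwards [ae_restrict_mem measurableSet_Ioc] with t ht
    rw [Real.norm_eq_abs, abs_of_nonneg (sq_nonneg _)]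
    have := hpt t ht.1
    have h2 : 0 ≤ K (t + h) ^ 2 := sq_nonneg _
    linarith
  -- difference function integrable
  have hdiff_int : IntervalIntegrable (fun t => g t - K (t + h) ^ 2) volume 0 T :=
    (hgint 0 T).sub hsh_int
  -- main comparison
  have step1 : (∫ t in (0:ℝ)..T, (K (t + h) - K t) ^ 2)
      ≤ ∫ t in (0:ℝ)..T, (g t - K (t + h) ^ 2) := by
    apply intervalIntegral.integral_mono_ae_restrict hT.le hF_int hdiff_int
    have h0 : (volume.restrict (Set.Icc (0:ℝ) T)) {0} = 0 := by
      rw [Measure.restrict_apply (measurableSet_singleton 0)]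
      exact measure_mono_null (Set.inter_subset_left) (measure_singleton 0)
    filter_upwards [ae_restrict_mem measurableSet_Icc,
      (measure_eq_zero_iff_ae_notMem.mp h0)] with t ht ht0
    exact hpt t (lt_of_le_of_ne ht.1 (fun e => ht0 e.symm))
  have step2 : (∫ t in (0:ℝ)..T, (g t - K (t + h) ^ 2))
      = (∫ t in (0:ℝ)..T, g t) - ∫ t in h..(T+h), g t := by
    rw [intervalIntegral.integral_sub (hgint 0 T) hsh_int]
    congr 1
    have : (∫ t in (0:ℝ)..T, K (t + h) ^ 2) = ∫ t in (0:ℝ)..T, g (t + h) := by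
      apply intervalIntegral.integral_congr
      intro t ht
      rw [Set.uIcc_of_le hT.le] at ht
      exact hKsq (t + h) (by linarith [ht.1])
    rw [this, intervalIntegral.integral_comp_add_right g h, zero_add]
  have step3 : (∫ t in (0:ℝ)..T, g t) - (∫ t in h..(T+h), g t)
      ≤ ∫ t in (0:ℝ)..h, g t := by
    have hsplit : (∫ t in h..T, g t) + (∫ t in T..(T+h), g t) = ∫ t in h..(T+h), g t :=
      intervalIntegral.integral_add_adjacent_intervals (hgint h T) (hgint T (T+h))
    have hsplit2 : (∫ t in (0:ℝ)..h, g t) + (∫ t in h..T, g t) = ∫ t in (0:ℝ)..T, g t :=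
      intervalIntegral.integral_add_adjacent_intervals (hgint 0 h) (hgint h T)
    have hnn : 0 ≤ ∫ t in T..(T+h), g t :=
      intervalIntegral.integral_nonneg (by linarith) (fun u hu => hgnonneg u (by linarith [hu.1]))
    linarith
  have step4 : (∫ t in (0:ℝ)..h, g t) = 1/((2*α-1) * c^2) * h ^ (2*α - 1) := by
    rw [hg]
    rw [intervalIntegral.integral_div]
    rw [integral_rpow (Or.inl hexp)]
    rw [Real.zero_rpow (by norm_num; linarith : 2*α - 2 + 1 ≠ 0)]
    field_simp
    ring
  calc (∫ t in (0:ℝ)..T, (K (t + h) - K t) ^ 2)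
      ≤ ∫ t in (0:ℝ)..T, (g t - K (t + h) ^ 2) := step1
    _ = (∫ t in (0:ℝ)..T, g t) - ∫ t in h..(T+h), g t := step2
    _ ≤ ∫ t in (0:ℝ)..h, g t := step3
    _ = 1/((2*α-1) * c^2) * h ^ (2*α - 1) := step4
end
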